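/- If f, g : [a,b] → ℝ with a, b ∈ [0,∞), a < b, g and f·g integrable on [a,b], f convex and nonnegative on [a,b], and g is s-convex in the second sense on [a,b] for some fixed s ∈ (0,1), then 2^s · f((a+b)/2) g((a+b)/2) − (1/(b-a)) ∫_a^b f(x)g(x) dx ≤ (1/((s+1)(s+2)))·(f(a)g(a)+f(b)g(b)) + (1/(s+2))·(f(a)g(b)+f(b)g(a)). -/

import Mathlib

open MeasureTheory Set

private lemma rpow_succ_aux (s x : ℝ) (hs : 0 < s) (hx : 0 ≤ x) :
    x ^ (s + 1) = x * x ^ s := by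
  rcases eq_or_lt_of_le hx with h | h
  · rw [← h, Real.zero_rpow (by positivity), Real.zero_rpow (by positivity), mul_zero]
  · rw [Real.rpow_add_one h.ne', mul_comm]

private lemma int_sub_aux (a b : ℝ) (hab : a < b) (f : ℝ → ℝ) :
    ∫ t in (0:ℝ)..1, f ((a - b) * t + b) = (1 / (b - a)) * ∫ x in a..b, f x := by
  have hne : a - b ≠ 0 := by intro h; linarith [sub_eq_zero.mp h]
  have hne' : b - a ≠ 0 := by intro h; linarith [sub_eq_zero.mp h]
  rw [intervalIntegral.integral_comp_mul_add f hne b]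
  norm_num
  rw [intervalIntegral.integral_symm a b]
  field_simp
  ring

private lemma int_sub_aux2 (a b : ℝ) (hab : a < b) (f : ℝ → ℝ) :
    ∫ t in (0:ℝ)..1, f ((b - a) * t + a) = (1 / (b - a)) * ∫ x in a..b, f x := by
  have hne : b - a ≠ 0 := by intro h; linarith [sub_eq_zero.mp h]
  rw [intervalIntegral.integral_comp_mul_add f hne a]
  norm_num

private lemma integrable_sub_aux (a b : ℝ) (hab : a < b) (f : ℝ → ℝ)
    (hf : IntervalIntegrable f volume a b) :
    IntervalIntegrable (fun t => f ((a - b) * t + b)) volume 0 1 := by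
  have hne : a - b ≠ 0 := by intro h; linarith [sub_eq_zero.mp h]
  have h1 := (hf.comp_add_right b).comp_mul_left (c := a - b)
  rw [div_self hne, sub_self, zero_div] at h1
  exact h1.symm

private lemma integrable_sub_aux2 (a b : ℝ) (hab : a < b) (f : ℝ → ℝ)
    (hf : IntervalIntegrable f volume a b) :
    IntervalIntegrable (fun t => f ((b - a) * t + a)) volume 0 1 := by
  have hne : b - a ≠ 0 := by intro h; linarith [sub_eq_zero.mp h]
  have h1 := (hf.comp_add_right a).comp_mul_left (c := b - a)
  rw [div_self hne, sub_self, zero_div] at h1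
  exact h1

set_option maxHeartbeats 1000000 in
theorem product_hadamard_midpoint
    (a b s : ℝ) (f g : ℝ → ℝ)
    (ha : 0 ≤ a) (hb : 0 ≤ b) (hab : a < b)
    (hs : s ∈ Set.Ioo (0:ℝ) 1)
    (hg : IntervalIntegrable g volume a b)
    (hfg : IntervalIntegrable (fun x => f x * g x) volume a b)
    (hf : ConvexOn ℝ (Set.Icc a b) f)
    (hf0 : ∀ x ∈ Set.Icc a b, 0 ≤ f x)
    (hgs : ∀ x ∈ Set.Icc a b, ∀ y ∈ Set.Icc a b, ∀ l ∈ Set.Icc (0:ℝ) 1,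
      g (l * x + (1 - l) * y) ≤ l ^ s * g x + (1 - l) ^ s * g y) :
    2 ^ s * f ((a + b) / 2) * g ((a + b) / 2) -
        (1 / (b - a)) * ∫ x in a..b, f x * g x ≤
      (1 / ((s + 1) * (s + 2))) * (f a * g a + f b * g b) +
        (1 / (s + 2)) * (f a * g b + f b * g a) := by
  obtain ⟨hs0, hs1⟩ := hs
  have hmem_a : a ∈ Set.Icc a b := left_mem_Icc.mpr hab.le
  have hmem_b : b ∈ Set.Icc a b := right_mem_Icc.mpr hab.le
  have hmem_m : (a + b) / 2 ∈ Set.Icc a b := ⟨by linarith, by linarith⟩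
  -- g is nonnegative on [a,b]
  have hg0 : ∀ x ∈ Set.Icc a b, 0 ≤ g x := by
    intro x hx
    have h := hgs x hx x hx (1/2) ⟨by norm_num, by norm_num⟩
    have e : (1:ℝ) - 1/2 = 1/2 := by norm_num
    rw [e, show (1/2:ℝ) * x + (1/2) * x = x from by ring] at h
    have hlt : (1/2:ℝ) ^ (1:ℝ) < (1/2) ^ s :=
      Real.rpow_lt_rpow_of_exponent_gt (by norm_num) (by norm_num) hs1
    rw [Real.rpow_one] at hlt
    by_contra hc
    push_neg at hc
    have h2 : (1/2:ℝ) ^ s * g x < (1/2) * g x := mul_lt_mul_of_neg_right hlt hc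
    linarith
  -- the key pointwise inequality
  have key : ∀ t ∈ Set.Icc (0:ℝ) 1,
      2 ^ s * f ((a + b) / 2) * g ((a + b) / 2) ≤
        (1/2) * (f ((a - b) * t + b) * g ((a - b) * t + b) +
            f ((b - a) * t + a) * g ((b - a) * t + a)) +
        (1/2) * ((f a * g a + f b * g b) *
              ((1 - t) ^ s - (1 - t) ^ (s + 1) + (t ^ s - t ^ (s + 1))) +
            (f a * g b + f b * g a) * (t ^ (s + 1) + (1 - t) ^ (s + 1))) := by
    intro t ht
    obtain ⟨ht0, ht1⟩ := ht
    set u := (a - b) * t + b with hu_def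
    set v := (b - a) * t + a with hv_def
    have hu : u ∈ Set.Icc a b := ⟨by nlinarith, by nlinarith⟩
    have hv : v ∈ Set.Icc a b := ⟨by nlinarith, by nlinarith⟩
    -- rpow simplifications
    rw [rpow_succ_aux s t hs0 ht0, rpow_succ_aux s (1 - t) hs0 (by linarith)]
    -- midpoint bounds
    have hfm : f ((a + b) / 2) ≤ (1/2) * f u + (1/2) * f v := by
      have h := hf.2 hu hv (by norm_num : (0:ℝ) ≤ 1/2) (by norm_num : (0:ℝ) ≤ 1/2)
        (by norm_num : (1/2:ℝ) + 1/2 = 1)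
      simp only [smul_eq_mul] at h
      rwa [show (1/2:ℝ) * u + (1/2) * v = (a + b) / 2 from by
        rw [hu_def, hv_def]; ring] at h
    have hgm : g ((a + b) / 2) ≤ (1/2) ^ s * g u + (1/2) ^ s * g v := by
      have h := hgs u hu v hv (1/2) ⟨by norm_num, by norm_num⟩
      have e : (1:ℝ) - 1/2 = 1/2 := by norm_num
      rw [e] at h
      rwa [show (1/2:ℝ) * u + (1/2) * v = (a + b) / 2 from by
        rw [hu_def, hv_def]; ring] at h
    -- endpoint bounds
    have hfu : f u ≤ t * f a + (1 - t) * f b := by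
      have h := hf.2 hmem_a hmem_b ht0 (by linarith : (0:ℝ) ≤ 1 - t)
        (by ring : t + (1 - t) = 1)
      simp only [smul_eq_mul] at h
      rwa [show t * a + (1 - t) * b = u from by rw [hu_def]; ring] at h
    have hfv : f v ≤ t * f b + (1 - t) * f a := by
      have h := hf.2 hmem_b hmem_a ht0 (by linarith : (0:ℝ) ≤ 1 - t)
        (by ring : t + (1 - t) = 1)
      simp only [smul_eq_mul] at h
      rwa [show t * b + (1 - t) * a = v from by rw [hv_def]; ring] at h
    have hgu : g u ≤ t ^ s * g a + (1 - t) ^ s * g b := by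
      have h := hgs a hmem_a b hmem_b t ⟨ht0, ht1⟩
      rwa [show t * a + (1 - t) * b = u from by rw [hu_def]; ring] at h
    have hgv : g v ≤ t ^ s * g b + (1 - t) ^ s * g a := by
      have h := hgs b hmem_b a hmem_a t ⟨ht0, ht1⟩
      rwa [show t * b + (1 - t) * a = v from by rw [hv_def]; ring] at h
    -- nonnegativity
    have hfu0 := hf0 u hu
    have hfv0 := hf0 v hv
    have hgu0 := hg0 u hu
    have hgv0 := hg0 v hv
    have hgm0 := hg0 _ hmem_m
    have hfa0 := hf0 a hmem_a
    have hfb0 := hf0 b hmem_b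
    have hts0 : (0:ℝ) ≤ t ^ s := Real.rpow_nonneg ht0 s
    have hts1 : (0:ℝ) ≤ (1 - t) ^ s := Real.rpow_nonneg (by linarith) s
    -- multiply midpoint bounds
    have h1 : f ((a + b) / 2) * g ((a + b) / 2) ≤
        ((1/2) * f u + (1/2) * f v) * ((1/2) ^ s * g u + (1/2) ^ s * g v) := by
      apply mul_le_mul hfm hgm hgm0 (by linarith)
    have h2 : (2:ℝ) ^ s * (f ((a + b) / 2) * g ((a + b) / 2)) ≤
        (2:ℝ) ^ s * (((1/2) * f u + (1/2) * f v) * ((1/2) ^ s * g u + (1/2) ^ s * g v)) :=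
      mul_le_mul_of_nonneg_left h1 (Real.rpow_nonneg (by norm_num) s)
    have h2s : (2:ℝ) ^ s * (1/2:ℝ) ^ s = 1 := by
      rw [← Real.mul_rpow (by norm_num) (by norm_num)]
      norm_num
    have h3 : (2:ℝ) ^ s * (((1/2) * f u + (1/2) * f v) * ((1/2) ^ s * g u + (1/2) ^ s * g v)) =
        (1/2) * (f u * g u + f v * g v) + (1/2) * (f u * g v + f v * g u) := by
      linear_combination ((1/2) * (f u + f v) * (g u + g v)) * h2s
    rw [h3] at h2
    -- cross term bounds
    have h4 : f u * g v ≤ (t * f a + (1 - t) * f b) * (t ^ s * g b + (1 - t) ^ s * g a) :=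
      mul_le_mul hfu hgv hgv0 (by nlinarith)
    have h5 : f v * g u ≤ (t * f b + (1 - t) * f a) * (t ^ s * g a + (1 - t) ^ s * g b) :=
      mul_le_mul hfv hgu hgu0 (by nlinarith)
    linarith [h2, h4, h5]
  -- integrability of the right-hand side
  have hFi : IntervalIntegrable
      (fun t => f ((a - b) * t + b) * g ((a - b) * t + b)) volume 0 1 :=
    integrable_sub_aux a b hab (fun x => f x * g x) hfg
  have hGi : IntervalIntegrable
      (fun t => f ((b - a) * t + a) * g ((b - a) * t + a)) volume 0 1 :=
    integrable_sub_aux2 a b hab (fun x => f x * g x) hfg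
  have hc1 : Continuous (fun t : ℝ => t ^ s) := Real.continuous_rpow_const hs0.le
  have hc2 : Continuous (fun t : ℝ => t ^ (s + 1)) := Real.continuous_rpow_const (by linarith)
  have hc3 : Continuous (fun t : ℝ => (1 - t) ^ s) :=
    hc1.comp (continuous_const.sub continuous_id)
  have hc4 : Continuous (fun t : ℝ => (1 - t) ^ (s + 1)) :=
    hc2.comp (continuous_const.sub continuous_id)
  have hBi : IntervalIntegrable (fun t : ℝ =>
      (f a * g a + f b * g b) * ((1 - t) ^ s - (1 - t) ^ (s + 1) + (t ^ s - t ^ (s + 1))) +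
        (f a * g b + f b * g a) * (t ^ (s + 1) + (1 - t) ^ (s + 1))) volume 0 1 := by
    exact ((continuous_const.mul ((hc3.sub hc4).add (hc1.sub hc2))).add
      (continuous_const.mul (hc2.add hc4))).intervalIntegrable 0 1
  have hRi : IntervalIntegrable (fun t : ℝ =>
      (1/2) * (f ((a - b) * t + b) * g ((a - b) * t + b) +
          f ((b - a) * t + a) * g ((b - a) * t + a)) +
      (1/2) * ((f a * g a + f b * g b) *
            ((1 - t) ^ s - (1 - t) ^ (s + 1) + (t ^ s - t ^ (s + 1))) +
          (f a * g b + f b * g a) * (t ^ (s + 1) + (1 - t) ^ (s + 1)))) volume 0 1 :=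
    ((hFi.add hGi).const_mul (1/2)).add (hBi.const_mul (1/2))
  -- monotonicity of the integral
  have hmono := intervalIntegral.integral_mono_on (μ := volume) (by norm_num : (0:ℝ) ≤ 1)
    (intervalIntegrable_const (c := 2 ^ s * f ((a + b) / 2) * g ((a + b) / 2))) hRi key
  -- value of the left integral
  rw [intervalIntegral.integral_const, smul_eq_mul] at hmono
  -- value of the right integral
  have hI1 : ∫ t in (0:ℝ)..1, t ^ s = 1 / (s + 1) := by
    rw [integral_rpow (Or.inl (by linarith))]
    rw [Real.one_rpow, Real.zero_rpow (by positivity)]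
    norm_num
  have hI2 : ∫ t in (0:ℝ)..1, t ^ (s + 1) = 1 / (s + 2) := by
    rw [integral_rpow (Or.inl (by linarith))]
    rw [Real.one_rpow, Real.zero_rpow (by positivity)]
    norm_num
    ring
  have hI3 : ∫ t in (0:ℝ)..1, (1 - t) ^ s = 1 / (s + 1) := by
    rw [intervalIntegral.integral_comp_sub_left (fun y => y ^ s) 1]
    norm_num
    rw [integral_rpow (Or.inl (by linarith))]
    rw [Real.one_rpow, Real.zero_rpow (by positivity)]
    norm_num
  have hI4 : ∫ t in (0:ℝ)..1, (1 - t) ^ (s + 1) = 1 / (s + 2) := by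
    rw [intervalIntegral.integral_comp_sub_left (fun y => y ^ (s + 1)) 1]
    norm_num
    rw [integral_rpow (Or.inl (by linarith))]
    rw [Real.one_rpow, Real.zero_rpow (by positivity)]
    norm_num
    ring
  have hIF : ∫ t in (0:ℝ)..1, f ((a - b) * t + b) * g ((a - b) * t + b) =
      (1 / (b - a)) * ∫ x in a..b, f x * g x :=
    int_sub_aux a b hab (fun x => f x * g x)
  have hIG : ∫ t in (0:ℝ)..1, f ((b - a) * t + a) * g ((b - a) * t + a) =
      (1 / (b - a)) * ∫ x in a..b, f x * g x :=
    int_sub_aux2 a b hab (fun x => f x * g x)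
  have hval : (∫ t in (0:ℝ)..1,
      ((1/2) * (f ((a - b) * t + b) * g ((a - b) * t + b) +
          f ((b - a) * t + a) * g ((b - a) * t + a)) +
      (1/2) * ((f a * g a + f b * g b) *
            ((1 - t) ^ s - (1 - t) ^ (s + 1) + (t ^ s - t ^ (s + 1))) +
          (f a * g b + f b * g a) * (t ^ (s + 1) + (1 - t) ^ (s + 1))))) =
      (1 / (b - a)) * (∫ x in a..b, f x * g x) +
        ((1 / ((s + 1) * (s + 2))) * (f a * g a + f b * g b) +
          (1 / (s + 2)) * (f a * g b + f b * g a)) := by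
    rw [intervalIntegral.integral_add ((hFi.add hGi).const_mul (1/2)) (hBi.const_mul (1/2))]
    rw [intervalIntegral.integral_const_mul, intervalIntegral.integral_const_mul]
    rw [intervalIntegral.integral_add hFi hGi]
    rw [intervalIntegral.integral_add
      ((((hc3.intervalIntegrable 0 1).sub (hc4.intervalIntegrable 0 1)).add
        ((hc1.intervalIntegrable 0 1).sub (hc2.intervalIntegrable 0 1))).const_mul _)
      (((hc2.intervalIntegrable 0 1).add (hc4.intervalIntegrable 0 1)).const_mul _)]
    rw [intervalIntegral.integral_const_mul, intervalIntegral.integral_const_mul]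
    rw [intervalIntegral.integral_add
      ((hc3.intervalIntegrable 0 1).sub (hc4.intervalIntegrable 0 1))
      ((hc1.intervalIntegrable 0 1).sub (hc2.intervalIntegrable 0 1))]
    rw [intervalIntegral.integral_sub (hc3.intervalIntegrable 0 1) (hc4.intervalIntegrable 0 1)]
    rw [intervalIntegral.integral_sub (hc1.intervalIntegrable 0 1) (hc2.intervalIntegrable 0 1)]
    rw [intervalIntegral.integral_add (hc2.intervalIntegrable 0 1) (hc4.intervalIntegrable 0 1)]
    rw [hI1, hI2, hI3, hI4, hIF, hIG]
    have hs1ne : s + 1 ≠ 0 := by linarith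
    have hs2ne : s + 2 ≠ 0 := by linarith
    field_simp
    ring
  rw [hval] at hmono
  linarith
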